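/- Let X be a type and n ≥ 1. Every path γ : [0, k] → Symⁿ(X) in the n-fold symmetric product that is a concatenation of elementary moves (each move changes exactly one coordinate of the multiset) lifts to n paths γ₁, …, γₙ in X of length k such that at each time step exactly one γᵢ moves; moreover, there is a permutation σ ∈ Sₙ with γᵢ joining the i-th coordinate of the start point to the σ(i)-th coordinate of the end point. -/

import Mathlib

open Classical in
/-- Decompose `List.ofFn f` as `f i ::ₘ r` such that updating coordinate `i`
replaces the head. -/
private lemma cons_ofFn_update {X : Type*} {n : ℕ} (f : Fin n → X) (i : Fin n) :
    ∃ r : Multiset X, (List.ofFn f : Multiset X) = f i ::ₘ r ∧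
      ∀ y : X, (List.ofFn (Function.update f i y) : Multiset X) = y ::ₘ r := by
  have huniv : ∀ g : Fin n → X, (List.ofFn g : Multiset X) = Multiset.map g Finset.univ.val := by
    intro g; rw [List.ofFn_eq_map]; rfl
  have hcons : (Finset.univ.val : Multiset (Fin n)) = i ::ₘ Finset.univ.val.erase i :=
    (Multiset.cons_erase (Finset.mem_univ i)).symm
  have hnodup : (Finset.univ.val : Multiset (Fin n)).Nodup := Finset.univ.nodup
  refine ⟨Multiset.map f (Finset.univ.val.erase i), ?_, ?_⟩
  · rw [huniv]; conv_lhs => rw [hcons, Multiset.map_cons]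
  · intro y
    rw [huniv]
    conv_lhs => rw [hcons, Multiset.map_cons]
    rw [Function.update_self]
    congr 1
    refine Multiset.map_congr rfl fun j hj => ?_
    have hji : j ≠ i := ((hnodup.mem_erase_iff).mp hj).1
    simp [Function.update_of_ne hji]

/-- Equality of multisets of two tuples yields a permutation matching them. -/
private lemma exists_perm_of_ofFn_eq {X : Type*} :
    ∀ {n : ℕ} (f g : Fin n → X), (List.ofFn f : Multiset X) = (List.ofFn g : Multiset X) →
      ∃ σ : Equiv.Perm (Fin n), ∀ i, f i = g (σ i) := by
  intro n
  induction n with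
  | zero => exact fun f g _ => ⟨1, fun i => i.elim0⟩
  | succ n ih =>
    intro f g h
    have hmem : f 0 ∈ (List.ofFn g : Multiset X) := by
      rw [← h]
      simp [List.mem_ofFn]
    obtain ⟨j, hj⟩ := List.mem_ofFn.mp (by exact_mod_cast hmem : f 0 ∈ List.ofFn g)
    set g' : Fin (n + 1) → X := g ∘ Equiv.swap 0 j with hg'
    have hgg' : (List.ofFn g' : Multiset X) = (List.ofFn g : Multiset X) :=
      Multiset.coe_eq_coe.mpr (Equiv.Perm.ofFn_comp_perm (Equiv.swap 0 j) g)
    have h0 : g' 0 = f 0 := by simp [hg', hj]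
    have hcons : (f 0 ::ₘ (List.ofFn (f ∘ Fin.succ) : Multiset X)) =
        (f 0 ::ₘ (List.ofFn (g' ∘ Fin.succ) : Multiset X)) := by
      have h1 : (List.ofFn f : Multiset X) = f 0 ::ₘ (List.ofFn (f ∘ Fin.succ) : Multiset X) := by
        rw [List.ofFn_succ]; rfl
      have h2 : (List.ofFn g' : Multiset X) =
          f 0 ::ₘ (List.ofFn (g' ∘ Fin.succ) : Multiset X) := by
        rw [List.ofFn_succ, h0]; rfl
      rw [← h1, ← h2, h, hgg']
    have htail := (Multiset.cons_inj_right (f 0)).mp hcons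
    obtain ⟨τ, hτ⟩ := ih (f ∘ Fin.succ) (g' ∘ Fin.succ) htail
    refine ⟨Equiv.Perm.decomposeFin.symm (j, τ), ?_⟩
    intro i
    induction i using Fin.cases with
    | zero => simp [hj]
    | succ i =>
      have := hτ i
      simpa [hg', Equiv.Perm.decomposeFin_symm_apply_succ] using this

/-- Lift a chain of elementary moves to a sequence of tuples, each step changing
at most one coordinate. -/
private lemma exists_lift {X : Type*} (n : ℕ) :
    ∀ (k : ℕ) (m : Fin (k + 1) → Multiset X),
      (∀ t : Fin k, ∃ (s : Multiset X) (x y : X),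
        m t.castSucc = x ::ₘ s ∧ m t.succ = y ::ₘ s) →
      ∀ start : Fin n → X, m 0 = (List.ofFn start : Multiset X) →
      ∃ g : Fin (k + 1) → (Fin n → X),
        g 0 = start ∧
        (∀ t, (List.ofFn (g t) : Multiset X) = m t) ∧
        (∀ t : Fin k, ∃ i : Fin n, ∀ j : Fin n, j ≠ i → g t.castSucc j = g t.succ j) := by
  intro k
  induction k with
  | zero =>
    intro m _ start h0
    refine ⟨fun _ => start, rfl, fun t => ?_, fun t => t.elim0⟩
    have : t = 0 := Fin.ext (by omega)
    rw [this, h0]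
  | succ k ih =>
    intro m hmove start h0
    obtain ⟨g', hg0, hgm, hgmove⟩ := ih (fun t => m t.castSucc)
      (fun t => by
        obtain ⟨s, x, y, hx, hy⟩ := hmove t.castSucc
        exact ⟨s, x, y, hx, by show m t.succ.castSucc = y ::ₘ s; rw [← Fin.succ_castSucc]; exact hy⟩)
      start (by simpa using h0)
    -- last move
    obtain ⟨s, x, y, hx, hy⟩ := hmove (Fin.last k)
    have hlast : (List.ofFn (g' (Fin.last k)) : Multiset X) = x ::ₘ s := by
      rw [hgm (Fin.last k)]; exact hx
    have hxmem : x ∈ (List.ofFn (g' (Fin.last k)) : Multiset X) := by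
      rw [hlast]; exact Multiset.mem_cons_self x s
    obtain ⟨i, hi⟩ := List.mem_ofFn.mp (by exact_mod_cast hxmem : x ∈ List.ofFn (g' (Fin.last k)))
    obtain ⟨r, hr1, hr2⟩ := cons_ofFn_update (g' (Fin.last k)) i
    have hrs : r = s := by
      rw [hi] at hr1
      exact (Multiset.cons_inj_right x).mp (hr1 ▸ hlast)
    set f' : Fin n → X := Function.update (g' (Fin.last k)) i y with hf'
    have hf'm : (List.ofFn f' : Multiset X) = m (Fin.last (k + 1)) := by
      rw [hf', hr2 y, hrs, ← Fin.succ_last, hy]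
    refine ⟨Fin.snoc g' f', ?_, ?_, ?_⟩
    · have : (0 : Fin (k + 2)) = Fin.castSucc 0 := rfl
      rw [this, Fin.snoc_castSucc, hg0]
    · intro t
      induction t using Fin.lastCases with
      | last => rw [Fin.snoc_last]; exact hf'm
      | cast t => rw [Fin.snoc_castSucc]; exact hgm t
    · intro t
      induction t using Fin.lastCases with
      | last =>
        refine ⟨i, fun j hj => ?_⟩
        rw [Fin.succ_last, Fin.snoc_last, Fin.snoc_castSucc, hf', Function.update_of_ne hj]
      | cast t =>
        obtain ⟨i', hi'⟩ := hgmove t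
        refine ⟨i', fun j hj => ?_⟩
        rw [Fin.snoc_castSucc, Fin.succ_castSucc, Fin.snoc_castSucc]
        exact hi' j hj

/-- A path in `Symⁿ(X)` made of elementary moves (each changing one element of the
multiset) lifts to `n` paths in `X`, at each time step all but (at most) one of
which are constant, joining the coordinates of the start point to the coordinates
of the end point up to a permutation `σ`. -/
theorem stmt_13 {X : Type*} (n k : ℕ) (hn : 1 ≤ n)
    (m : Fin (k + 1) → Multiset X)
    (hcard : ∀ t, Multiset.card (m t) = n)
    (hmove : ∀ t : Fin k, ∃ (s : Multiset X) (x y : X),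
      m t.castSucc = x ::ₘ s ∧ m t.succ = y ::ₘ s)
    (start fin : Fin n → X)
    (h0 : m 0 = (List.ofFn start : Multiset X))
    (hk : m (Fin.last k) = (List.ofFn fin : Multiset X)) :
    ∃ γ : Fin n → Fin (k + 1) → X,
      (∀ t, ((List.ofFn fun i => γ i t : List X) : Multiset X) = m t) ∧
      (∀ t : Fin k, ∃ i : Fin n, ∀ j : Fin n, j ≠ i →
        γ j t.castSucc = γ j t.succ) ∧
      ∃ σ : Equiv.Perm (Fin n),
        (∀ i, γ i 0 = start i) ∧ (∀ i, γ i (Fin.last k) = fin (σ i)) := by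
  obtain ⟨g, hg0, hgm, hgmove⟩ := exists_lift n k m hmove start h0
  obtain ⟨σ, hσ⟩ := exists_perm_of_ofFn_eq (g (Fin.last k)) fin (by rw [hgm, hk])
  refine ⟨fun i t => g t i, fun t => hgm t, fun t => ?_, σ,
    fun i => congrFun hg0 i, fun i => hσ i⟩
  obtain ⟨i, hi⟩ := hgmove t
  exact ⟨i, hi⟩
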